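/- Let Z ⊂ ℝ⁴ be a 2-dimensional subspace which is neither J-complex nor (−J)-complex, where J is the standard complex structure, and let Z^⊥ be its orthogonal complement. If the complex loci satisfy ℰ_Z = ℰ_{Z^⊥} (every J-complex line meeting Z also meets Z^⊥ and vice versa), then Z is Lagrangian with respect to the standard symplectic form. Conversely, if Z is Lagrangian then ℰ_Z = ℰ_{Z^⊥}. -/

import Mathlib

/- Coordinates on ℝ⁴ in the order (x₁, x₂, y₁, y₂). -/

/-- The Euclidean dot product on ℝ⁴. -/
def dot4 (u v : Fin 4 → ℝ) : ℝ := ∑ i, u i * v i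

/-- The standard symplectic form `ω = dx₁∧dy₁ + dx₂∧dy₂`. -/
def omegaStd (u v : Fin 4 → ℝ) : ℝ := u 0 * v 2 - u 2 * v 0 + u 1 * v 3 - u 3 * v 1

/-- The standard complex structure `J` with `J∂_{x_j} = ∂_{y_j}`. -/
def Jm : Matrix (Fin 4) (Fin 4) ℝ :=
  !![0, 0, -1, 0; 0, 0, 0, -1; 1, 0, 0, 0; 0, 1, 0, 0]

lemma Jm_mulVec (v : Fin 4 → ℝ) :
    Jm.mulVec v = ![-(v 2), -(v 3), v 0, v 1] := by
  funext i
  fin_cases i <;>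
    simp [Jm, Matrix.mulVec, dotProduct, Fin.sum_univ_four, Matrix.vecHead, Matrix.vecTail]

lemma JJ (v : Fin 4 → ℝ) : Jm.mulVec (Jm.mulVec v) = -v := by
  rw [Jm_mulVec, Jm_mulVec]
  funext i
  fin_cases i <;> simp

lemma dot4_J (u v : Fin 4 → ℝ) : dot4 u (Jm.mulVec v) = -omegaStd u v := by
  rw [Jm_mulVec]
  simp [dot4, omegaStd, Fin.sum_univ_four]
  ring

lemma dot4_comm (u v : Fin 4 → ℝ) : dot4 u v = dot4 v u := by
  simp [dot4, mul_comm]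

lemma omega_antisymm (u v : Fin 4 → ℝ) : omegaStd u v = -omegaStd v u := by
  simp [omegaStd]; ring

lemma omega_self (u : Fin 4 → ℝ) : omegaStd u u = 0 := by
  simp [omegaStd]; ring

lemma dot4_right_comb (z' x y : Fin 4 → ℝ) (a b : ℝ) :
    dot4 z' (a • x + b • y) = a * dot4 z' x + b * dot4 z' y := by
  simp [dot4, Fin.sum_univ_four]; ring

lemma dot4_sub_smul (u v : Fin 4 → ℝ) (c : ℝ) :
    dot4 u (v - c • u) = dot4 u v - c * dot4 u u := by
  simp [dot4, Fin.sum_univ_four]; ring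

lemma omega_sub_smul (u v : Fin 4 → ℝ) (c : ℝ) :
    omegaStd u (v - c • u) = omegaStd u v - c * omegaStd u u := by
  simp [omegaStd]; ring

lemma dot4_self_eq_zero {v : Fin 4 → ℝ} (h : dot4 v v = 0) : v = 0 := by
  have h' : ∑ i, v i * v i = 0 := h
  funext i
  have hi := (Finset.sum_eq_zero_iff_of_nonneg
    (fun j _ => mul_self_nonneg (v j))).mp h' i (Finset.mem_univ i)
  exact mul_self_eq_zero.mp hi

lemma dot4_self_ne_zero {v : Fin 4 → ℝ} (hv : v ≠ 0) : dot4 v v ≠ 0 :=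
  fun h => hv (dot4_self_eq_zero h)

lemma Jm_ne_zero {v : Fin 4 → ℝ} (hv : v ≠ 0) : Jm.mulVec v ≠ 0 := by
  intro h
  apply hv
  have := congrArg Jm.mulVec h
  rw [JJ, Matrix.mulVec_zero] at this
  simpa using congrArg Neg.neg this

theorem complex_loci_equal_iff_lagrangian
    (Z Zp : Submodule ℝ (Fin 4 → ℝ))
    (hdim : Module.finrank ℝ Z = 2)
    (hperp : ∀ w, w ∈ Zp ↔ ∀ z ∈ Z, dot4 z w = 0)
    (hnotJ : ¬ (∀ w ∈ Z, Jm.mulVec w ∈ Z)) :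
    (∀ E : Submodule ℝ (Fin 4 → ℝ), Module.finrank ℝ E = 2 →
        (∀ w ∈ E, Jm.mulVec w ∈ E) → (E ⊓ Z ≠ ⊥ ↔ E ⊓ Zp ≠ ⊥)) ↔
      (∀ a ∈ Z, ∀ b ∈ Z, omegaStd a b = 0) := by
  constructor
  · -- loci equal ⇒ Lagrangian
    intro h
    have key : ∀ z ∈ Z, z ≠ 0 → ∃ lam : ℝ, ∀ z' ∈ Z, omegaStd z' z = lam * dot4 z' z := by
      intro z hz hz0
      set Jz := Jm.mulVec z with hJzdef
      have hJz0 : Jz ≠ 0 := Jm_ne_zero hz0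
      have hzz : dot4 z z ≠ 0 := dot4_self_ne_zero hz0
      have hperpz : dot4 z Jz = 0 := by rw [hJzdef, dot4_J, omega_self, neg_zero]
      have hind : LinearIndependent ℝ ![z, Jz] := by
        rw [LinearIndependent.pair_iff]
        intro s t hst
        have h1 : dot4 z (s • z + t • Jz) = 0 := by rw [hst]; simp [dot4]
        rw [dot4_right_comb, hperpz, mul_zero, add_zero] at h1
        have hs : s = 0 := by
          rcases mul_eq_zero.mp h1 with h | h
          · exact h
          · exact absurd h hzz
        refine ⟨hs, ?_⟩
        rw [hs, zero_smul, zero_add] at hst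
        rcases smul_eq_zero.mp hst with h | h
        · exact h
        · exact absurd h hJz0
      set E := Submodule.span ℝ ({z, Jz} : Set (Fin 4 → ℝ)) with hEdef
      have hrange : Set.range ![z, Jz] = ({z, Jz} : Set (Fin 4 → ℝ)) := by
        ext x
        simp [Fin.exists_fin_two]
        tauto
      have hE2 : Module.finrank ℝ E = 2 := by
        rw [hEdef, ← hrange, finrank_span_eq_card hind, Fintype.card_fin]
      have hEJ : ∀ w ∈ E, Jm.mulVec w ∈ E := by
        intro w hw
        induction hw using Submodule.span_induction with
        | mem x hx =>
          rcases hx with h | h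
          · subst h
            exact Submodule.subset_span (by right; rfl)
          · simp only [Set.mem_singleton_iff] at h
            subst h
            rw [hJzdef, JJ]
            exact neg_mem (Submodule.subset_span (by left; rfl))
        | zero => simp [Matrix.mulVec_zero]
        | add x y _ _ hx hy => rw [Matrix.mulVec_add]; exact add_mem hx hy
        | smul c x _ hx => rw [Matrix.mulVec_smul]; exact Submodule.smul_mem _ c hx
      have hEZ : E ⊓ Z ≠ ⊥ :=
        Submodule.ne_bot_iff _ |>.mpr
          ⟨z, ⟨Submodule.subset_span (by left; rfl), hz⟩, hz0⟩
      obtain ⟨w, hw, hw0⟩ := (Submodule.ne_bot_iff _).mp ((h E hE2 hEJ).mp hEZ)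
      obtain ⟨a, b, hab⟩ := Submodule.mem_span_pair.mp hw.1
      have hwZp := (hperp w).mp hw.2
      have hb : b ≠ 0 := by
        intro hb0
        rw [hb0, zero_smul, add_zero] at hab
        have h1 : dot4 z w = 0 := hwZp z hz
        rw [← hab] at h1
        have h2 : dot4 z (a • z) = a * dot4 z z := by
          simpa using dot4_right_comb z z z a 0
        rw [h2] at h1
        rcases mul_eq_zero.mp h1 with h' | h'
        · exact hw0 (by rw [← hab, h', zero_smul])
        · exact hzz h'
      refine ⟨a / b, ?_⟩
      intro z' hz'
      have h1 : dot4 z' w = 0 := hwZp z' hz'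
      rw [← hab, dot4_right_comb, hJzdef, dot4_J] at h1
      field_simp
      linarith [h1]
    intro u hu v hv
    by_cases hu0 : u = 0
    · simp [omegaStd, hu0]
    obtain ⟨lam, hlam⟩ := key u hu hu0
    have huu : dot4 u u ≠ 0 := dot4_self_ne_zero hu0
    set c := dot4 u v / dot4 u u with hc
    have hv' : v - c • u ∈ Z := Z.sub_mem hv (Z.smul_mem c hu)
    have hdot : dot4 u (v - c • u) = 0 := by
      rw [dot4_sub_smul, hc]
      field_simp
      ring
    have homega : omegaStd (v - c • u) u = 0 := by
      rw [hlam _ hv', dot4_comm, hdot, mul_zero]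
    have : omegaStd u (v - c • u) = 0 := by
      rw [omega_antisymm, homega, neg_zero]
    rw [omega_sub_smul, omega_self, mul_zero, sub_zero] at this
    exact this
  · -- Lagrangian ⇒ loci equal
    intro hL E hE2 hEJ
    -- J as a linear equivalence
    have hJJlin : ∀ v, Jm.mulVecLin (Jm.mulVecLin v) = -v := by
      intro v; simp only [Matrix.mulVecLin_apply]; exact JJ v
    set Jequiv : (Fin 4 → ℝ) ≃ₗ[ℝ] (Fin 4 → ℝ) :=
      LinearEquiv.ofLinear Jm.mulVecLin (-Jm.mulVecLin)
        (LinearMap.ext fun v => by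
          simp only [LinearMap.comp_apply, LinearMap.neg_apply, LinearMap.id_apply,
            Matrix.mulVecLin_apply, Matrix.mulVec_neg, JJ, neg_neg])
        (LinearMap.ext fun v => by
          simp only [LinearMap.comp_apply, LinearMap.neg_apply, LinearMap.id_apply,
            Matrix.mulVecLin_apply, Matrix.mulVec_neg, JJ, neg_neg]) with hJequiv
    -- dimension of Zp
    have hZpdim : Module.finrank ℝ Zp = 2 := by
      set e : (Fin 4 → ℝ) ≃ₗ[ℝ] EuclideanSpace ℝ (Fin 4) :=
        (WithLp.linearEquiv 2 ℝ (Fin 4 → ℝ)).symm with he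
      have hmap : Zp.map e.toLinearMap = (Z.map e.toLinearMap)ᗮ := by
        ext x
        rw [Submodule.mem_map_equiv, Submodule.mem_orthogonal]
        rw [hperp]
        constructor
        · intro hx u hu
          rw [Submodule.mem_map_equiv] at hu
          have := hx _ hu
          simp only [PiLp.inner_apply, RCLike.inner_apply, conj_trivial]
          rw [← this]
          simp [dot4, e, mul_comm]
        · intro hx z hz
          have hz' : (e z : EuclideanSpace ℝ (Fin 4)) ∈ Z.map e.toLinearMap :=
            Submodule.mem_map_of_mem hz
          have := hx _ hz'
          show (∑ i, z i * (e.symm x) i) = 0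
          rw [← this]
          simp [PiLp.inner_apply, RCLike.inner_apply]
          exact Finset.sum_congr rfl fun i _ => mul_comm _ _
      have h1 : Module.finrank ℝ (Zp.map e.toLinearMap) = Module.finrank ℝ Zp :=
        LinearEquiv.finrank_map_eq e Zp
      have h2 : Module.finrank ℝ (Z.map e.toLinearMap) = Module.finrank ℝ Z :=
        LinearEquiv.finrank_map_eq e Z
      have h3 := Submodule.finrank_add_finrank_orthogonal (K := Z.map e.toLinearMap)
      rw [h2, hdim] at h3
      have h4 : Module.finrank ℝ (EuclideanSpace ℝ (Fin 4)) = 4 := by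
        simp [finrank_euclideanSpace]
      rw [h4] at h3
      rw [← hmap, h1] at h3
      omega
    -- JZ = Zp
    have hle : Z.map Jequiv.toLinearMap ≤ Zp := by
      rintro w ⟨zz, hzz, rfl⟩
      rw [hperp]
      intro z' hz'
      have : Jequiv.toLinearMap zz = Jm.mulVec zz := rfl
      rw [this, dot4_J, hL z' hz' zz hzz, neg_zero]
    have hJZ : Z.map Jequiv.toLinearMap = Zp :=
      Submodule.eq_of_le_of_finrank_eq hle
        (by rw [LinearEquiv.finrank_map_eq, hdim, hZpdim])
    constructor
    · intro hne
      obtain ⟨zz, hzz, hzz0⟩ := (Submodule.ne_bot_iff _).mp hne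
      refine (Submodule.ne_bot_iff _).mpr ⟨Jm.mulVec zz, ⟨hEJ zz hzz.1, ?_⟩, Jm_ne_zero hzz0⟩
      rw [← hJZ]
      exact ⟨zz, hzz.2, rfl⟩
    · intro hne
      obtain ⟨w, hw, hw0⟩ := (Submodule.ne_bot_iff _).mp hne
      have hwZp : w ∈ Zp := hw.2
      rw [← hJZ] at hwZp
      obtain ⟨zz, hzzZ, hzzw⟩ := hwZp
      have hwz : Jm.mulVec w = -zz := by
        rw [← hzzw]
        show Jm.mulVec (Jm.mulVec zz) = -zz
        exact JJ zz
      refine (Submodule.ne_bot_iff _).mpr ⟨Jm.mulVec w, ⟨hEJ w hw.1, ?_⟩, Jm_ne_zero hw0⟩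
      rw [hwz]
      exact Z.neg_mem hzzZ
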